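/- The algebra G₀₇ on ℂ³ with products e₁·e₂ = e₂ and e₃·e₃ = e₃ (other basis products zero) satisfies the δ-Novikov identities for every δ ∈ ℂ, and is neither commutative nor associative. -/
import Mathlib


/-- Multiplication of G₀₇ on ℂ³: e₁e₂ = e₂, e₃e₃ = e₃. -/
noncomputable def mulG07 (x y : Fin 3 → ℂ) : Fin 3 → ℂ :=
  ![0, x 0 * y 1, x 2 * y 2]

noncomputable def eG07 (i : Fin 3) : Fin 3 → ℂ := fun j => if j = i then 1 else 0

/-- G₀₇ is δ-Novikov for every δ, but neither commutative nor associative. -/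
theorem stmt_16 :
    (∀ δ : ℂ, ∀ x y z : Fin 3 → ℂ,
      δ • mulG07 (mulG07 x y) z - mulG07 x (mulG07 y z)
        = δ • mulG07 (mulG07 y x) z - mulG07 y (mulG07 x z)) ∧
    (∀ x y z : Fin 3 → ℂ, mulG07 (mulG07 x y) z = mulG07 (mulG07 x z) y) ∧
    mulG07 (eG07 0) (eG07 1) ≠ mulG07 (eG07 1) (eG07 0) ∧
    mulG07 (mulG07 (eG07 0) (eG07 0)) (eG07 1) ≠ mulG07 (eG07 0) (mulG07 (eG07 0) (eG07 1)) := by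
  refine ⟨?_, ?_, ?_, ?_⟩
  · intro δ x y z
    funext i
    fin_cases i <;> simp [mulG07] <;> ring
  · intro x y z
    funext i
    fin_cases i <;> simp [mulG07] <;> ring
  · intro h
    have := congrFun h 1
    simp [mulG07, eG07] at this
  · intro h
    have := congrFun h 1
    simp [mulG07, eG07] at this
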